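/- Let A₁ = ℕ ∩ ⋃_{n∈ℕ} [4^n, (2 - 1/n)·4^n), A₂ = ℕ ∩ ⋃_{n∈ℕ} [(2 + 1/n)·4^n, 4^{n+1}), and A = (A₁ ∩ 2ℕ) ∪ (A₂ ∩ (2ℕ+1)). Then the natural density of A equals 1/2 and there is no infinite set B ⊆ ℕ and t ∈ ℕ with B + B + t ⊆ A. -/

import Mathlib

open Filter
open scoped Classical

noncomputable def countIn (A : Set ℕ) (N : ℕ) : ℕ :=
  ((Finset.Icc 1 N).filter (fun n => n ∈ A)).card

noncomputable def upperDensity (A : Set ℕ) : ℝ :=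
  limsup (fun N => (countIn A N : ℝ) / N) atTop

noncomputable def lowerDensity (A : Set ℕ) : ℝ :=
  liminf (fun N => (countIn A N : ℝ) / N) atTop

def hasDensity (A : Set ℕ) (d : ℝ) : Prop :=
  Tendsto (fun N => (countIn A N : ℝ) / N) atTop (nhds d)

lemma card_even_Ico (a b : ℕ) :
    ((Finset.Ico a b).filter (fun m => m % 2 = 0)).card = (b + 1) / 2 - (a + 1) / 2 := by
  induction b with
  | zero => rw [Finset.Ico_eq_empty_of_le (Nat.zero_le a)]; simp
  | succ b ih =>
    rcases le_or_gt a b with h | h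
    · rw [Nat.Ico_succ_right_eq_insert_Ico h, Finset.filter_insert]
      by_cases hb : b % 2 = 0
      · rw [if_pos hb, Finset.card_insert_of_notMem (by simp), ih]; omega
      · rw [if_neg hb, ih]; omega
    · rw [Finset.Ico_eq_empty_of_le (by omega)] at ih
      rw [Finset.Ico_eq_empty_of_le (by omega)]
      simp at ih ⊢; omega

lemma card_odd_Ico (a b : ℕ) :
    ((Finset.Ico a b).filter (fun m => m % 2 = 1)).card = b / 2 - a / 2 := by
  induction b with
  | zero => rw [Finset.Ico_eq_empty_of_le (Nat.zero_le a)]; simp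
  | succ b ih =>
    rcases le_or_gt a b with h | h
    · rw [Nat.Ico_succ_right_eq_insert_Ico h, Finset.filter_insert]
      by_cases hb : b % 2 = 1
      · rw [if_pos hb, Finset.card_insert_of_notMem (by simp), ih]; omega
      · rw [if_neg hb, ih]; omega
    · rw [Finset.Ico_eq_empty_of_le (by omega)] at ih
      rw [Finset.Ico_eq_empty_of_le (by omega)]
      simp at ih ⊢; omega

def Aset : Set ℕ :=
  ({m : ℕ | ∃ n : ℕ, 1 ≤ n ∧ 4 ^ n ≤ m ∧ (m : ℝ) < (2 - 1 / n) * 4 ^ n}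
      ∩ {m : ℕ | m % 2 = 0})
    ∪ ({m : ℕ | ∃ n : ℕ, 1 ≤ n ∧ (2 + 1 / n) * 4 ^ n ≤ (m : ℝ) ∧ m < 4 ^ (n + 1)}
      ∩ {m : ℕ | m % 2 = 1})

lemma cond1_iff (m n : ℕ) (hn : 1 ≤ n) :
    ((m:ℝ) < (2 - 1/n) * 4^n) ↔ m*n < (2*n-1)*4^n := by
  have hn0 : (0:ℝ) < n := by exact_mod_cast hn
  rw [← Nat.cast_lt (α := ℝ)]
  push_cast [Nat.cast_sub (by omega : 1 ≤ 2*n)]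
  rw [show ((2*(n:ℝ)-1))*4^n = ((2 - 1/n)*4^n)*n by field_simp]
  exact (mul_lt_mul_iff_of_pos_right hn0).symm

lemma cond2_iff (m n : ℕ) (hn : 1 ≤ n) :
    ((2 + 1/(n:ℝ)) * 4^n ≤ m) ↔ (2*n+1)*4^n ≤ m*n := by
  have hn0 : (0:ℝ) < n := by exact_mod_cast hn
  rw [← Nat.cast_le (α := ℝ)]
  push_cast
  rw [show ((2*(n:ℝ)+1))*4^n = ((2 + 1/n)*4^n)*n by field_simp]
  exact (mul_le_mul_iff_of_pos_right hn0).symm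

lemma memA_iff (m : ℕ) : m ∈ Aset ↔
    ((∃ n, 1 ≤ n ∧ 4^n ≤ m ∧ m*n < (2*n-1)*4^n) ∧ m % 2 = 0) ∨
    ((∃ n, 1 ≤ n ∧ (2*n+1)*4^n ≤ m*n ∧ m < 4^(n+1)) ∧ m % 2 = 1) := by
  unfold Aset
  constructor
  · rintro (⟨⟨n, hn, h1, h2⟩, hp⟩ | ⟨⟨n, hn, h1, h2⟩, hp⟩)
    · exact Or.inl ⟨⟨n, hn, h1, (cond1_iff m n hn).1 h2⟩, hp⟩
    · exact Or.inr ⟨⟨n, hn, (cond2_iff m n hn).1 h1, h2⟩, hp⟩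
  · rintro (⟨⟨n, hn, h1, h2⟩, hp⟩ | ⟨⟨n, hn, h1, h2⟩, hp⟩)
    · exact Or.inl ⟨⟨n, hn, h1, (cond1_iff m n hn).2 h2⟩, hp⟩
    · exact Or.inr ⟨⟨n, hn, (cond2_iff m n hn).2 h1, h2⟩, hp⟩

def Dv (c n : ℕ) : ℕ := (c-1)/n + 1

lemma Dv_iff (c n m : ℕ) (hn : 0 < n) (hc : 0 < c) : m * n < c ↔ m < Dv c n := by
  unfold Dv
  rw [Nat.lt_succ_iff, Nat.le_div_iff_mul_le hn]
  omega

lemma Dv_mul_bounds (c n : ℕ) (hn : 0 < n) (hc : 0 < c) :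
    c ≤ Dv c n * n ∧ Dv c n * n ≤ c - 1 + n := by
  have h1 := Nat.div_add_mod (c-1) n
  have h2 := Nat.mod_lt (c-1) hn
  have h3 : Dv c n * n = n * ((c-1)/n) + n := by unfold Dv; ring
  generalize n * ((c-1)/n) = w at h1 h3
  omega

noncomputable def blockF (n X : ℕ) : Finset ℕ :=
  ((Finset.Ico (4^n) (min (Dv ((2*n-1)*4^n) n) X)).filter (fun m => m % 2 = 0)) ∪
  ((Finset.Ico (Dv ((2*n+1)*4^n) n) (min (4^(n+1)) X)).filter (fun m => m % 2 = 1))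

lemma pow4_pos (n : ℕ) : 0 < 4^n := Nat.pow_pos (by norm_num)

lemma lt_pow4 (n : ℕ) : n < 4^n := Nat.lt_pow_self (by norm_num)

lemma eo_bounds (n : ℕ) (hn : 1 ≤ n) :
    2*n*4^n ≤ Dv ((2*n-1)*4^n) n * n + 4^n ∧ Dv ((2*n-1)*4^n) n * n + 4^n ≤ 2*n*4^n + n ∧
    2*n*4^n + 4^n ≤ Dv ((2*n+1)*4^n) n * n ∧ Dv ((2*n+1)*4^n) n * n ≤ 2*n*4^n + 4^n + n := by
  have hp : 0 < 4^n := pow4_pos n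
  have hc1 : 0 < (2*n-1)*4^n := Nat.mul_pos (by omega) hp
  have hc2 : 0 < (2*n+1)*4^n := Nat.mul_pos (by omega) hp
  obtain ⟨h1, h2⟩ := Dv_mul_bounds ((2*n-1)*4^n) n (by omega) hc1
  obtain ⟨h3, h4⟩ := Dv_mul_bounds ((2*n+1)*4^n) n (by omega) hc2
  have hs : (2*n-1)*4^n + 4^n = 2*n*4^n := by
    have h : (2*n-1) + 1 = 2*n := by omega
    calc (2*n-1)*4^n + 4^n = ((2*n-1)+1)*4^n := by ring
    _ = 2*n*4^n := by rw [h]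
  have hs2 : (2*n+1)*4^n = 2*n*4^n + 4^n := by ring
  rw [hs2] at h3 h4 ⊢
  generalize (2*n-1)*4^n = X at h1 h2 hc1 hs ⊢
  generalize Dv X n * n = E at h1 h2 ⊢
  generalize hZ : 2*n*4^n = Z at hs h3 h4 ⊢
  generalize Dv (Z + 4^n) n * n = O at h3 h4 ⊢
  omega

lemma block_bounds (n : ℕ) (hn : 1 ≤ n) :
    4^n ≤ Dv ((2*n-1)*4^n) n ∧ Dv ((2*n-1)*4^n) n ≤ 2*4^n ∧
    2*4^n < Dv ((2*n+1)*4^n) n ∧ Dv ((2*n+1)*4^n) n ≤ 4*4^n := by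
  have hp : 0 < 4^n := pow4_pos n
  have hnp : n < 4^n := lt_pow4 n
  obtain ⟨hA, hB, hC, hD⟩ := eo_bounds n hn
  set e := Dv ((2*n-1)*4^n) n
  set o := Dv ((2*n+1)*4^n) n
  refine ⟨?_, ?_, ?_, ?_⟩
  · have : n * 4^n ≤ n * e := by nlinarith
    exact Nat.le_of_mul_le_mul_left this (by omega)
  · have : n * e < n * (2*4^n) := by nlinarith
    exact le_of_lt (Nat.lt_of_mul_lt_mul_left this)
  · have : n * (2*4^n) < n * o := by nlinarith
    exact Nat.lt_of_mul_lt_mul_left this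
  · have : n * o ≤ n * (4*4^n) := by nlinarith
    exact Nat.le_of_mul_le_mul_left this (by omega)

lemma blockF_subset (n X : ℕ) (hn : 1 ≤ n) :
    blockF n X ⊆ Finset.Ico (4^n) (4^(n+1)) := by
  obtain ⟨h1, h2, h3, h4⟩ := block_bounds n hn
  intro m hm
  simp only [blockF, Finset.mem_union, Finset.mem_filter, Finset.mem_Ico, lt_min_iff] at hm ⊢
  have hps : (4:ℕ)^(n+1) = 4*4^n := by ring
  rcases hm with ⟨⟨hm1, hm2, _⟩, _⟩ | ⟨⟨hm1, hm2, _⟩, _⟩ <;> omega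

lemma countA_eq (N : ℕ) (hN : 1 ≤ N) :
    countIn Aset N = ∑ n ∈ Finset.Icc 1 (Nat.log 4 N), (blockF n (N+1)).card := by
  have hdisj : ∀ n ∈ Finset.Icc 1 (Nat.log 4 N), ∀ n' ∈ Finset.Icc 1 (Nat.log 4 N),
      n ≠ n' → Disjoint (blockF n (N+1)) (blockF n' (N+1)) := by
    intro a ha b hb hab
    rw [Finset.disjoint_left]
    intro m hma hmb
    have h1 := blockF_subset a (N+1) (Finset.mem_Icc.1 ha).1 hma
    have h2 := blockF_subset b (N+1) (Finset.mem_Icc.1 hb).1 hmb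
    rw [Finset.mem_Ico] at h1 h2
    rcases Nat.lt_or_ge a b with h | h
    · have : 4^(a+1) ≤ 4^b := Nat.pow_le_pow_right (by norm_num) h
      omega
    · have hba : b < a := by omega
      have : 4^(b+1) ≤ 4^a := Nat.pow_le_pow_right (by norm_num) hba
      omega
  have hset : (Finset.Icc 1 N).filter (fun m => m ∈ Aset)
      = (Finset.Icc 1 (Nat.log 4 N)).biUnion (fun n => blockF n (N+1)) := by
    ext m
    simp only [Finset.mem_filter, Finset.mem_Icc, Finset.mem_biUnion]
    constructor
    · rintro ⟨⟨hm1, hm2⟩, hmA⟩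
      rcases (memA_iff m).1 hmA with ⟨⟨n, hn1, h1, h2⟩, hp⟩ | ⟨⟨n, hn1, h1, h2⟩, hp⟩
      · refine ⟨n, ?_, ?_⟩
        · exact ⟨hn1, (Nat.le_log_iff_pow_le (by norm_num) (by omega)).2 (le_trans h1 hm2)⟩
        · simp only [blockF, Finset.mem_union, Finset.mem_filter, Finset.mem_Ico, lt_min_iff]
          left
          have he := (Dv_iff ((2*n-1)*4^n) n m (by omega) (Nat.mul_pos (by omega) (pow4_pos n))).1 h2
          exact ⟨⟨h1, he, by omega⟩, hp⟩
      · obtain ⟨hbb1, hbb2, hbb3, hbb4⟩ := block_bounds n hn1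
        have hpp := pow4_pos n
        have ho : Dv ((2*n+1)*4^n) n ≤ m := by
          by_contra hcon
          have := (Dv_iff ((2*n+1)*4^n) n m (by omega) (Nat.mul_pos (by omega) hpp)).2 (by omega)
          omega
        have h4n : 4^n ≤ m := by omega
        refine ⟨n, ?_, ?_⟩
        · exact ⟨hn1, (Nat.le_log_iff_pow_le (by norm_num) (by omega)).2 (le_trans h4n hm2)⟩
        · simp only [blockF, Finset.mem_union, Finset.mem_filter, Finset.mem_Ico, lt_min_iff]
          right
          exact ⟨⟨ho, h2, by omega⟩, hp⟩
    · rintro ⟨n, hn, hm⟩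
      simp only [blockF, Finset.mem_union, Finset.mem_filter, Finset.mem_Ico, lt_min_iff] at hm
      obtain ⟨hbb1, hbb2, hbb3, hbb4⟩ := block_bounds n hn.1
      have hpp := pow4_pos n
      rcases hm with ⟨⟨h1, h2, h3⟩, hp⟩ | ⟨⟨h1, h2, h3⟩, hp⟩
      · have hlt : m*n < (2*n-1)*4^n :=
          (Dv_iff ((2*n-1)*4^n) n m (by omega) (Nat.mul_pos (by omega) hpp)).2 h2
        exact ⟨⟨by omega, by omega⟩, (memA_iff m).2 (Or.inl ⟨⟨n, hn.1, h1, hlt⟩, hp⟩)⟩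
      · have hge : (2*n+1)*4^n ≤ m*n := by
          by_contra hcon
          have := (Dv_iff ((2*n+1)*4^n) n m (by omega) (Nat.mul_pos (by omega) hpp)).1 (by omega)
          omega
        exact ⟨⟨by omega, by omega⟩, (memA_iff m).2 (Or.inr ⟨⟨n, hn.1, hge, h2⟩, hp⟩)⟩
  unfold countIn
  rw [hset, Finset.card_biUnion hdisj]

lemma blockF_card (n X : ℕ) :
    (blockF n X).card = ((min (Dv ((2*n-1)*4^n) n) X + 1)/2 - (4^n+1)/2)
      + ((min (4^(n+1)) X)/2 - (Dv ((2*n+1)*4^n) n)/2) := by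
  unfold blockF
  rw [Finset.card_union_of_disjoint, card_even_Ico, card_odd_Ico]
  rw [Finset.disjoint_left]
  intro m hm1 hm2
  simp only [Finset.mem_filter] at hm1 hm2
  omega

lemma eo_real (n : ℕ) (hn : 1 ≤ n) :
    2*(4:ℝ)^n - 4^n/n ≤ (Dv ((2*n-1)*4^n) n : ℝ) ∧
    (Dv ((2*n-1)*4^n) n : ℝ) ≤ 2*4^n - 4^n/n + 1 ∧
    2*(4:ℝ)^n + 4^n/n ≤ (Dv ((2*n+1)*4^n) n : ℝ) ∧
    (Dv ((2*n+1)*4^n) n : ℝ) ≤ 2*4^n + 4^n/n + 1 := by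
  obtain ⟨hA, hB, hC, hD⟩ := eo_bounds n hn
  have hn0 : (0:ℝ) < n := by exact_mod_cast hn
  have key : (n:ℝ) * ((4:ℝ)^n/n) = 4^n := mul_div_cancel₀ _ (ne_of_gt hn0)
  have cA : 2*(n:ℝ)*4^n ≤ (Dv ((2*n-1)*4^n) n : ℝ)*n + 4^n := by exact_mod_cast hA
  have cB : (Dv ((2*n-1)*4^n) n : ℝ)*n + 4^n ≤ 2*n*4^n + n := by exact_mod_cast hB
  have cC : 2*(n:ℝ)*4^n + 4^n ≤ (Dv ((2*n+1)*4^n) n : ℝ)*n := by exact_mod_cast hC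
  have cD : (Dv ((2*n+1)*4^n) n : ℝ)*n ≤ 2*n*4^n + 4^n + n := by exact_mod_cast hD
  refine ⟨?_, ?_, ?_, ?_⟩
  · nlinarith [cA, key, hn0]
  · nlinarith [cB, key, hn0]
  · nlinarith [cC, key, hn0]
  · nlinarith [cD, key, hn0]

lemma block_full_bounds (n X : ℕ) (hn : 1 ≤ n) (hX : 4^(n+1) ≤ X) :
    (3/2)*(4:ℝ)^n - 4^n/n - 3 ≤ ((blockF n X).card : ℝ) ∧
    ((blockF n X).card : ℝ) ≤ (3/2)*(4:ℝ)^n + 3 := by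
  obtain ⟨hbb1, hbb2, hbb3, hbb4⟩ := block_bounds n hn
  obtain ⟨he1, he2, ho1, ho2⟩ := eo_real n hn
  have hpp := pow4_pos n
  have hps : (4:ℕ)^(n+1) = 4*4^n := by ring
  have hpn : (0:ℝ) ≤ (4:ℝ)^n/n := by positivity
  have hcard := blockF_card n X
  set c := (blockF n X).card
  set e := Dv ((2*n-1)*4^n) n
  set o := Dv ((2*n+1)*4^n) n
  have hmin1 : min e X = e := by omega
  have hmin2 : min (4^(n+1)) X = 4^(n+1) := by omega
  rw [hmin1, hmin2, hps] at hcard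
  have hnat : e + 4*4^n ≤ 2*c + 4^n + o + 2 ∧ 2*c + 4^n + o ≤ e + 4*4^n + 2 := by omega
  have hc1 : (e:ℝ) + 4*4^n ≤ 2*c + 4^n + o + 2 := by exact_mod_cast hnat.1
  have hc2 : 2*(c:ℝ) + 4^n + o ≤ e + 4*4^n + 2 := by exact_mod_cast hnat.2
  constructor <;> linarith

lemma block_last_bounds (n X : ℕ) (hn : 1 ≤ n) (hX1 : 4^n < X) (hX2 : X ≤ 4^(n+1)) :
    ((X:ℝ) - 1 - 4^n)/2 - 4^n/n - 3 ≤ ((blockF n X).card : ℝ) ∧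
    ((blockF n X).card : ℝ) ≤ ((X:ℝ) - 1 - 4^n)/2 + 4^n/n + 3 := by
  obtain ⟨hbb1, hbb2, hbb3, hbb4⟩ := block_bounds n hn
  obtain ⟨he1, he2, ho1, ho2⟩ := eo_real n hn
  have hpp := pow4_pos n
  have hn0 : (0:ℝ) < n := by exact_mod_cast hn
  have hpn : (0:ℝ) ≤ (4:ℝ)^n/n := by positivity
  have hps : (4:ℕ)^(n+1) = 4*4^n := by ring
  have hcard := blockF_card n X
  set c := (blockF n X).card with hc
  set e := Dv ((2*n-1)*4^n) n
  set o := Dv ((2*n+1)*4^n) n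
  have hcp : ((4:ℕ)^n : ℝ) = (4:ℝ)^n := by push_cast; ring
  rcases le_or_gt X e with h1 | h1
  · -- X ≤ e
    have hnat : X ≤ 2*c + 4^n + 2 ∧ 2*c + 4^n ≤ X + 2 := by omega
    have c1 : (X:ℝ) ≤ 2*c + 4^n + 2 := by exact_mod_cast hnat.1
    have c2 : 2*(c:ℝ) + 4^n ≤ X + 2 := by exact_mod_cast hnat.2
    constructor <;> linarith
  · rcases le_or_gt X o with h2 | h2
    · -- e < X ≤ o
      have hnat : e ≤ 2*c + 4^n + 2 ∧ 2*c + 4^n ≤ e + 2 := by omega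
      have c1 : (e:ℝ) ≤ 2*c + 4^n + 2 := by exact_mod_cast hnat.1
      have c2 : 2*(c:ℝ) + 4^n ≤ e + 2 := by exact_mod_cast hnat.2
      have c3 : (X:ℝ) ≤ o := by exact_mod_cast h2
      have c4 : (e:ℝ) < X := by exact_mod_cast h1
      constructor <;> linarith
    · -- o < X
      have hnat : e + X ≤ 2*c + 4^n + o + 4 ∧ 2*c + 4^n + o ≤ e + X + 2 := by omega
      have c1 : (e:ℝ) + X ≤ 2*c + 4^n + o + 4 := by exact_mod_cast hnat.1
      have c2 : 2*(c:ℝ) + 4^n + o ≤ e + X + 2 := by exact_mod_cast hnat.2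
      constructor <;> linarith

noncomputable def Sr (K : ℕ) : ℝ := ∑ n ∈ Finset.Icc 1 K, (4:ℝ)^n/n

lemma Sr_nonneg (K : ℕ) : 0 ≤ Sr K := by
  apply Finset.sum_nonneg
  intro i _
  positivity

lemma Sr_mono {m K : ℕ} (h : m ≤ K) : Sr m ≤ Sr K := by
  apply Finset.sum_le_sum_of_subset_of_nonneg
  · exact Finset.Icc_subset_Icc_right h
  · intro i _ _; positivity

lemma Sr_bound : ∀ K : ℕ, 1 ≤ K → (K:ℝ) * Sr K ≤ 8*4^K := by
  intro K
  induction K with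
  | zero => omega
  | succ K ih =>
    intro _
    rcases Nat.eq_zero_or_pos K with h | h
    · subst h
      norm_num [Sr]
    · have h1 := ih h
      have h2 : Sr (K+1) = Sr K + 4^(K+1)/((K:ℝ)+1) := by
        unfold Sr
        rw [Finset.sum_Icc_succ_top (by omega : 1 ≤ K+1)]
        push_cast
        ring
      have hK0 : (0:ℝ) < K := by exact_mod_cast h
      have hK1r : (1:ℝ) ≤ K := by exact_mod_cast h
      have hSr : Sr K ≤ 8*4^K := by
        nlinarith [Sr_nonneg K, h1, hK0, hK1r]
      have hp : (0:ℝ) < 4^K := by positivity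
      have hdiv : ((K:ℝ)+1) * ((4:ℝ)^(K+1)/((K:ℝ)+1)) = 4^(K+1) := by
        field_simp
      have h3 : ((K:ℝ)+1) * Sr (K+1) = ((K:ℝ)+1)*Sr K + 4^(K+1) := by
        rw [h2, mul_add, hdiv]
      have h4 : ((K:ℝ)+1)*Sr K = (K:ℝ)*Sr K + Sr K := by ring
      have hpow : (4:ℝ)^(K+1) = 4*4^K := by ring
      push_cast
      rw [h3, h4, hpow]
      linarith [h1, hSr, hp]

lemma sum_pow4 (K : ℕ) : ∑ n ∈ Finset.Icc 1 K, (4:ℝ)^n = ((4:ℝ)^(K+1) - 4)/3 := by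
  induction K with
  | zero => norm_num
  | succ K ih =>
    rw [Finset.sum_Icc_succ_top (by omega : 1 ≤ K+1), ih]
    ring

lemma count_est (N : ℕ) (hN : 4 ≤ N) :
    |(countIn Aset N : ℝ) - N/2| ≤ 9*((4:ℝ)^(Nat.log 4 N)/(Nat.log 4 N)) + 3*(Nat.log 4 N) + 5 := by
  set K := Nat.log 4 N with hKdef
  have hK1 : 1 ≤ K := by
    rw [hKdef]
    exact (Nat.le_log_iff_pow_le (by norm_num) (by omega)).2 (by simpa using hN)
  have h4K : 4^K ≤ N := Nat.pow_log_le_self 4 (by omega)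
  have hKN : N < 4^(K+1) := Nat.lt_pow_succ_log_self (by norm_num) N
  have hsplit : countIn Aset N = (∑ n ∈ Finset.Icc 1 (K-1), (blockF n (N+1)).card)
      + (blockF K (N+1)).card := by
    rw [countA_eq N (by omega)]
    rw [← hKdef]
    have : K = (K-1) + 1 := by omega
    rw [this, Finset.sum_Icc_succ_top (by omega : 1 ≤ K-1+1), ← this]
  have hfull : ∀ n ∈ Finset.Icc 1 (K-1),
      (3/2)*(4:ℝ)^n - 4^n/n - 3 ≤ ((blockF n (N+1)).card : ℝ) ∧
      ((blockF n (N+1)).card : ℝ) ≤ (3/2)*(4:ℝ)^n + 3 := by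
    intro n hn
    rw [Finset.mem_Icc] at hn
    apply block_full_bounds n (N+1) hn.1
    have : 4^(n+1) ≤ 4^K := Nat.pow_le_pow_right (by norm_num) (by omega)
    omega
  have hlast := block_last_bounds K (N+1) hK1 (by omega) (by omega)
  have hlow : ∑ n ∈ Finset.Icc 1 (K-1), ((3/2)*(4:ℝ)^n - 4^n/n - 3)
      ≤ ∑ n ∈ Finset.Icc 1 (K-1), ((blockF n (N+1)).card : ℝ) :=
    Finset.sum_le_sum (fun n hn => (hfull n hn).1)
  have hup : ∑ n ∈ Finset.Icc 1 (K-1), ((blockF n (N+1)).card : ℝ)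
      ≤ ∑ n ∈ Finset.Icc 1 (K-1), ((3/2)*(4:ℝ)^n + 3) :=
    Finset.sum_le_sum (fun n hn => (hfull n hn).2)
  have hsum1 : ∑ n ∈ Finset.Icc 1 (K-1), ((3/2)*(4:ℝ)^n - 4^n/n - 3)
      = (3/2)*((4:ℝ)^K - 4)/3 - Sr (K-1) - 3*((K:ℝ)-1) := by
    rw [Finset.sum_sub_distrib, Finset.sum_sub_distrib, ← Finset.mul_sum, sum_pow4, Sr]
    have h9 : (K-1)+1 = K := by omega
    rw [h9]
    simp [Nat.card_Icc]
    push_cast [Nat.cast_sub hK1]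
    ring
  have hsum2 : ∑ n ∈ Finset.Icc 1 (K-1), ((3/2)*(4:ℝ)^n + 3)
      = (3/2)*((4:ℝ)^K - 4)/3 + 3*((K:ℝ)-1) := by
    rw [Finset.sum_add_distrib, ← Finset.mul_sum, sum_pow4]
    have h9 : (K-1)+1 = K := by omega
    rw [h9]
    simp [Nat.card_Icc]
    push_cast [Nat.cast_sub hK1]
    ring
  have hcast : (countIn Aset N : ℝ)
      = (∑ n ∈ Finset.Icc 1 (K-1), ((blockF n (N+1)).card : ℝ)) + ((blockF K (N+1)).card : ℝ) := by
    rw [hsplit]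
    push_cast
    ring
  have hSrb : (K:ℝ) * Sr K ≤ 8*4^K := Sr_bound K hK1
  have hK0 : (0:ℝ) < K := by exact_mod_cast hK1
  have hkey : (K:ℝ)*((4:ℝ)^K/K) = 4^K := mul_div_cancel₀ _ (ne_of_gt hK0)
  have hSr' : Sr (K-1) ≤ 8*((4:ℝ)^K/K) := by
    have h1 : Sr (K-1) ≤ Sr K := Sr_mono (by omega)
    nlinarith [hSrb, hkey, hK0, h1]
  have hlastlow : ((N:ℝ) - 4^K)/2 - 4^K/K - 3 ≤ ((blockF K (N+1)).card : ℝ) := by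
    have := hlast.1
    push_cast at this
    linarith
  have hlastup : ((blockF K (N+1)).card : ℝ) ≤ ((N:ℝ) - 4^K)/2 + 4^K/K + 3 := by
    have := hlast.2
    push_cast at this
    linarith
  have hpn : (0:ℝ) ≤ (4:ℝ)^K/K := by positivity
  have hKg : (1:ℝ) ≤ K := by exact_mod_cast hK1
  rw [abs_le]
  constructor
  · have h7 : (N:ℝ)/2 - (9*((4:ℝ)^K/K) + 3*K + 5) ≤ (countIn Aset N : ℝ) := by
      rw [hcast]
      have e1 : (3/2)*((4:ℝ)^K - 4)/3 - Sr (K-1) - 3*((K:ℝ)-1) + (((N:ℝ) - 4^K)/2 - 4^K/K - 3)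
          ≤ (∑ n ∈ Finset.Icc 1 (K-1), ((blockF n (N+1)).card : ℝ)) + ((blockF K (N+1)).card : ℝ) := by
        rw [← hsum1]
        exact add_le_add hlow hlastlow
      linarith [hSr']
    linarith
  · have h7 : (countIn Aset N : ℝ) ≤ N/2 + (9*((4:ℝ)^K/K) + 3*K + 5) := by
      rw [hcast]
      have e1 : (∑ n ∈ Finset.Icc 1 (K-1), ((blockF n (N+1)).card : ℝ)) + ((blockF K (N+1)).card : ℝ)
          ≤ (3/2)*((4:ℝ)^K - 4)/3 + 3*((K:ℝ)-1) + (((N:ℝ) - 4^K)/2 + 4^K/K + 3) := by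
        rw [← hsum2]
        exact add_le_add hup hlastup
      linarith [hpn]
    linarith

lemma poly_le_pow : ∀ K : ℕ, 5 ≤ K → K*(3*K+5) ≤ 4^K := by
  intro K
  induction K with
  | zero => omega
  | succ K ih =>
    intro h
    rcases Nat.lt_or_ge K 5 with h5 | h5
    · have hK4 : K = 4 := by omega
      subst hK4
      norm_num
    · have h1 := ih h5
      have h2 : (K+1)*(3*(K+1)+5) ≤ 4*(K*(3*K+5)) := by nlinarith
      calc (K+1)*(3*(K+1)+5) ≤ 4*(K*(3*K+5)) := h2
      _ ≤ 4*4^K := by omega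
      _ = 4^(K+1) := by ring

lemma density_half : Tendsto (fun N => (countIn Aset N : ℝ)/N) atTop (nhds (1/2)) := by
  rw [Metric.tendsto_atTop]
  intro ε hε
  obtain ⟨K₀', hK₀'⟩ := exists_nat_gt (20/ε)
  refine ⟨4^(max 5 K₀'), fun N hN => ?_⟩
  set K₀ := max 5 K₀' with hK₀def
  have hN4 : 4 ≤ N := by
    have h1 : (4:ℕ)^1 ≤ 4^K₀ := Nat.pow_le_pow_right (by norm_num) (by omega)
    omega
  set K := Nat.log 4 N with hKdef
  have hKK : K₀ ≤ K := (Nat.le_log_iff_pow_le (by norm_num) (by omega)).2 hN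
  have hK5 : 5 ≤ K := le_trans (le_max_left _ _) hKK
  have h4K : 4^K ≤ N := Nat.pow_log_le_self 4 (by omega)
  have hN0 : (0:ℝ) < N := by positivity
  have hKr : (0:ℝ) < K := by exact_mod_cast (by omega : 0 < K)
  have hpK : (0:ℝ) < 4^K := by positivity
  have h4KR : ((4:ℝ))^K ≤ N := by exact_mod_cast h4K
  have hest := count_est N hN4
  rw [← hKdef] at hest
  have heq : (countIn Aset N:ℝ)/N - 1/2 = ((countIn Aset N:ℝ) - N/2)/N := by
    rw [eq_div_iff (ne_of_gt hN0), sub_mul, div_mul_cancel₀ _ (ne_of_gt hN0)]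
    ring
  rw [Real.dist_eq, heq, abs_div, abs_of_pos hN0]
  have hnum : (0:ℝ) ≤ 9*((4:ℝ)^K/K) + 3*K + 5 := by positivity
  have step1 : |(countIn Aset N:ℝ) - N/2|/N ≤ (9*((4:ℝ)^K/K) + 3*K + 5)/(4^K) := by
    calc |(countIn Aset N:ℝ) - N/2|/N ≤ (9*((4:ℝ)^K/K) + 3*K + 5)/N := by gcongr
    _ ≤ (9*((4:ℝ)^K/K) + 3*K + 5)/(4^K) := by gcongr
  have step2 : (9*((4:ℝ)^K/K) + 3*K + 5)/(4^K) = 9/K + (3*K+5)/4^K := by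
    field_simp
    ring
  have step3 : ((3*K+5):ℝ)/4^K ≤ 1/K := by
    rw [div_le_div_iff₀ hpK hKr]
    have := poly_le_pow K hK5
    have hcast : ((K*(3*K+5) : ℕ) : ℝ) ≤ ((4^K : ℕ) : ℝ) := by exact_mod_cast this
    push_cast at hcast
    nlinarith [hcast]
  have hKbig : (20:ℝ)/ε < K := by
    have h1 : (K₀' : ℝ) ≤ K := by exact_mod_cast le_trans (le_max_right 5 K₀') hKK
    linarith
  have key2 : ((20:ℝ)/ε)*ε = 20 := div_mul_cancel₀ _ (ne_of_gt hε)
  have step4 : (10:ℝ)/K < ε := by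
    rw [div_lt_iff₀ hKr]
    nlinarith [hKbig, hε, key2]
  have step5 : (9:ℝ)/K + (3*K+5)/4^K ≤ 10/K := by
    have : (9:ℝ)/K + 1/K = 10/K := by ring
    linarith [step3]
  linarith [step1, step2.le, step2.ge, step5]

lemma A_elem_cases (m : ℕ) (hm : m ∈ Aset) :
    (m % 2 = 0 ∧ ∃ n, 1 ≤ n ∧ 4^n ≤ m ∧ m*n < (2*n-1)*4^n ∧ m < 2*4^n) ∨
    (m % 2 = 1 ∧ ∃ n, 1 ≤ n ∧ (2*n+1)*4^n ≤ m*n ∧ m < 4^(n+1) ∧ 2*4^n < m) := by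
  rcases (memA_iff m).1 hm with ⟨⟨n,hn,h1,h2⟩,hp⟩|⟨⟨n,hn,h1,h2⟩,hp⟩
  · left
    refine ⟨hp, n, hn, h1, h2, ?_⟩
    have hlt : n*m < n*(2*4^n) := by
      calc n*m = m*n := mul_comm _ _
      _ < (2*n-1)*4^n := h2
      _ ≤ (2*n)*4^n := mul_le_mul_left (by omega) _
      _ = n*(2*4^n) := by ring
    exact Nat.lt_of_mul_lt_mul_left hlt
  · right
    refine ⟨hp, n, hn, h1, h2, ?_⟩
    have hlt : n*(2*4^n) < n*m := by
      calc n*(2*4^n) = (2*n)*4^n := by ring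
      _ < (2*n+1)*4^n := by
          have := pow4_pos n
          exact Nat.mul_lt_mul_of_lt_of_le (by omega) (le_refl _) this
      _ ≤ m*n := h1
      _ = n*m := mul_comm _ _
    exact Nat.lt_of_mul_lt_mul_left hlt

lemma pow4_sq (m : ℕ) : m*m < 4^m := by
  have h : m < 2^m := Nat.lt_two_pow_self
  have h4 : (4:ℕ)^m = 2^m * 2^m := by
    rw [show (4:ℕ) = 2*2 from rfl, mul_pow]
  rw [h4]
  exact Nat.mul_lt_mul'' h h

lemma no_sumset (B : Set ℕ) (t : ℕ) (hB : B.Infinite)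
    (H : ∀ b₁ ∈ B, ∀ b₂ ∈ B, b₁ + b₂ + t ∈ Aset) : False := by
  have hsplit : (B ∩ {x | x % 2 = 0}).Infinite ∨ (B ∩ {x | x % 2 = 1}).Infinite := by
    by_contra hcon
    push_neg at hcon
    have hsub : B ⊆ (B ∩ {x | x % 2 = 0}) ∪ (B ∩ {x | x % 2 = 1}) := by
      intro x hx
      by_cases h : x % 2 = 0
      · exact Or.inl ⟨hx, h⟩
      · exact Or.inr ⟨hx, show x % 2 = 1 by omega⟩
    exact hB ((hcon.1.union hcon.2).subset hsub)
  obtain ⟨r, C, hCB, hCinf, hCr⟩ :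
      ∃ r, ∃ C : Set ℕ, C ⊆ B ∧ C.Infinite ∧ ∀ x ∈ C, x % 2 = r := by
    rcases hsplit with h | h
    · exact ⟨0, _, Set.inter_subset_left, h, fun x hx => hx.2⟩
    · exact ⟨1, _, Set.inter_subset_left, h, fun x hx => hx.2⟩
  obtain ⟨b, hb⟩ := hCinf.nonempty
  obtain ⟨b', hb'C, hb'big⟩ := hCinf.exists_gt (max b (4*4^(2*b+t)))
  have hb'b : b ≤ b' := le_trans (le_max_left _ _) (le_of_lt hb'big)
  have hb'4 : 4*4^(2*b+t) < b' := lt_of_le_of_lt (le_max_right _ _) hb'big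
  have hvA : b + b + t ∈ Aset := H b (hCB hb) b (hCB hb)
  have hsA : b + b' + t ∈ Aset := H b (hCB hb) b' (hCB hb'C)
  have huA : b' + b' + t ∈ Aset := H b' (hCB hb'C) b' (hCB hb'C)
  set v := b + b + t with hvdef
  set s := b + b' + t with hsdef
  set u := b' + b' + t with hudef
  have hrb := hCr b hb
  have hrb' := hCr b' hb'C
  have hsu : s ≤ u := by omega
  have hus : u ≤ 2*s := by omega
  have hb'u : b' ≤ u := by omega
  have hv4 : 4*4^v < b' := by
    have : 2*b + t = v := by omega
    rwa [this] at hb'4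
  rcases A_elem_cases v hvA with ⟨hpv, nv, hnv, hv1, hv2, hv3⟩ | ⟨hpv, nv, hnv, hv1, hv2, hv3⟩ <;>
    rcases A_elem_cases s hsA with ⟨hps, ns, hns, hs1, hs2, hs3⟩ | ⟨hps, ns, hns, hs1, hs2, hs3⟩ <;>
      rcases A_elem_cases u huA with ⟨hpu, nu, hnu, hu1, hu2, hu3⟩ | ⟨hpu, nu, hnu, hu1, hu2, hu3⟩
  · -- even branch: s, u in A1
    have e1 : (4:ℕ)^(ns+1) = 4*4^ns := by ring
    have e2 : (4:ℕ)^(nu+1) = 4*4^nu := by ring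
    have hm1 : nu ≤ ns := by
      have hcl : 4^nu < 4^(ns+1) := by omega
      exact Nat.lt_succ_iff.1 ((Nat.pow_lt_pow_iff_right (by norm_num)).1 hcl)
    have hm2 : ns ≤ nu := by
      have hcl : 4^ns < 4^(nu+1) := by omega
      exact Nat.lt_succ_iff.1 ((Nat.pow_lt_pow_iff_right (by norm_num)).1 hcl)
    have hmm : ns = nu := le_antisymm hm2 hm1
    subst hmm
    set m := ns with hmdef
    have hsum : u + v = 2*s := by omega
    have hmul : u*m + v*m = 2*(s*m) := by
      rw [← add_mul, hsum]; ring
    have hsm : 4^m*m ≤ s*m := mul_le_mul_left hs1 m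
    have hQ : (2*m-1)*4^m + 4^m = 2*(4^m*m) := by
      have h9 : (2*m-1)+1 = 2*m := by omega
      calc (2*m-1)*4^m + 4^m = ((2*m-1)+1)*4^m := by ring
      _ = 2*m*4^m := by rw [h9]
      _ = 2*(4^m*m) := by ring
    have hvm : 4^m < v*m := by
      generalize hA1 : (2*m-1)*4^m = Q at hu2 hQ
      generalize hA2 : 4^m*m = W at hQ hsm
      generalize hA3 : u*m = um at hu2 hmul
      generalize hA4 : s*m = sm at hsm hmul
      generalize hA5 : v*m = vm at hmul ⊢
      omega
    have hvm2 : 4^v < 4^m := by omega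
    have hvlt : v < m := (Nat.pow_lt_pow_iff_right (by norm_num)).1 hvm2
    have hsq := pow4_sq m
    have hfin : v*m + m ≤ m*m := by
      calc v*m + m = (v+1)*m := by ring
      _ ≤ m*m := mul_le_mul_left (by omega) m
    generalize hB1 : v*m = vm at hvm hfin
    generalize hB2 : m*m = mm at hsq hfin
    omega
  · omega
  · omega
  · omega
  · omega
  · omega
  · omega
  · -- odd branch: s, u in A2
    have e1 : (4:ℕ)^(ns+1) = 4*4^ns := by ring
    have e2 : (4:ℕ)^(nu+1) = 4*4^nu := by ring
    have hm1 : nu ≤ ns := by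
      have hcl : 4^nu < 4^(ns+1) := by omega
      exact Nat.lt_succ_iff.1 ((Nat.pow_lt_pow_iff_right (by norm_num)).1 hcl)
    have hm2 : ns ≤ nu := by
      have hcl : 4^ns < 4^(nu+1) := by omega
      exact Nat.lt_succ_iff.1 ((Nat.pow_lt_pow_iff_right (by norm_num)).1 hcl)
    have hmm : ns = nu := le_antisymm hm2 hm1
    subst hmm
    set m := ns with hmdef
    have hsum : u + v = 2*s := by omega
    have hmul : u*m + v*m = 2*(s*m) := by
      rw [← add_mul, hsum]; ring
    have hum : u*m < (4*4^m)*m := by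
      have hu4 : u < 4*4^m := by omega
      exact mul_lt_mul_of_pos_right hu4 (by omega)
    have hR : (2*m+1)*4^m = 2*(4^m*m) + 4^m := by ring
    have hT : (4*4^m)*m = 4*(4^m*m) := by ring
    have hvm : 2*4^m < v*m := by
      generalize hA1 : (2*m+1)*4^m = R at hs1 hR
      generalize hA2 : 4^m*m = W at hR hT
      generalize hA3 : (4*4^m)*m = T at hT hum
      generalize hA4 : u*m = um at hum hmul
      generalize hA5 : s*m = sm at hs1 hmul
      generalize hA6 : v*m = vm at hmul ⊢
      omega
    have hvm2 : 4^v < 4^m := by omega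
    have hvlt : v < m := (Nat.pow_lt_pow_iff_right (by norm_num)).1 hvm2
    have hsq := pow4_sq m
    have hfin : v*m + m ≤ m*m := by
      calc v*m + m = (v+1)*m := by ring
      _ ≤ m*m := mul_le_mul_left (by omega) m
    have hp4 : 0 < 4^m := pow4_pos m
    generalize hB1 : v*m = vm at hvm hfin
    generalize hB2 : m*m = mm at hsq hfin
    omega

theorem example_half_no_BBt :
    hasDensity (({m : ℕ | ∃ n : ℕ, 1 ≤ n ∧ 4 ^ n ≤ m ∧ (m : ℝ) < (2 - 1 / n) * 4 ^ n}
          ∩ {m : ℕ | m % 2 = 0})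
        ∪ ({m : ℕ | ∃ n : ℕ, 1 ≤ n ∧ (2 + 1 / n) * 4 ^ n ≤ (m : ℝ) ∧ m < 4 ^ (n + 1)}
          ∩ {m : ℕ | m % 2 = 1})) (1 / 2) ∧
    ∀ (B : Set ℕ) (t : ℕ), B.Infinite →
      ¬ (∀ b₁ ∈ B, ∀ b₂ ∈ B,
          b₁ + b₂ + t ∈
            ({m : ℕ | ∃ n : ℕ, 1 ≤ n ∧ 4 ^ n ≤ m ∧ (m : ℝ) < (2 - 1 / n) * 4 ^ n}
                ∩ {m : ℕ | m % 2 = 0})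
              ∪ ({m : ℕ | ∃ n : ℕ, 1 ≤ n ∧ (2 + 1 / n) * 4 ^ n ≤ (m : ℝ) ∧ m < 4 ^ (n + 1)}
                ∩ {m : ℕ | m % 2 = 1})) := by
  constructor
  · exact density_half
  · intro B t hB H
    exact no_sumset B t hB H
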